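/- There exists C > 0 such that for every α ∈ [−1,1], every x ∈ [−1,1], and every g ∈ H¹(−1,1) with g(α) = 0, one has |g(x)| ≤ C·|x−α|^{1/4} · (∫_{−1}^{1} |g'(s)|²√(1−s²) ds)^{1/2}. -/

import Mathlib

open MeasureTheory intervalIntegral Set Real

lemma weight_int_bound {a b : ℝ} (ha : -1 ≤ a) (hab : a ≤ b) (hb : b ≤ 1) :
    (∫ s in a..b, ((1 - s) ^ (-(1:ℝ)/2) + (1 + s) ^ (-(1:ℝ)/2))) ≤ 4 * Real.sqrt (b - a) := by
  have hi1 : IntervalIntegrable (fun s : ℝ => (1 - s) ^ (-(1:ℝ)/2)) volume a b := by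
    have := (intervalIntegrable_rpow' (a := 1 - a) (b := 1 - b)
      (r := -(1:ℝ)/2) (by norm_num)).comp_sub_left 1
    simpa using this
  have hi2 : IntervalIntegrable (fun s : ℝ => (1 + s) ^ (-(1:ℝ)/2)) volume a b := by
    have := (intervalIntegrable_rpow' (a := 1 + a) (b := 1 + b)
      (r := -(1:ℝ)/2) (by norm_num)).comp_add_left 1
    simpa using this
  have e1 : (∫ s in a..b, (1 - s) ^ (-(1:ℝ)/2))
      = 2 * (Real.sqrt (1 - a) - Real.sqrt (1 - b)) := by
    have h := intervalIntegral.integral_comp_sub_left (a := a) (b := b)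
      (f := fun x : ℝ => x ^ (-(1:ℝ)/2)) 1
    rw [h, integral_rpow (Or.inl (by norm_num))]
    norm_num
    rw [Real.sqrt_eq_rpow, Real.sqrt_eq_rpow]
    ring
  have e2 : (∫ s in a..b, (1 + s) ^ (-(1:ℝ)/2))
      = 2 * (Real.sqrt (1 + b) - Real.sqrt (1 + a)) := by
    have h := intervalIntegral.integral_comp_add_left (a := a) (b := b)
      (f := fun x : ℝ => x ^ (-(1:ℝ)/2)) 1
    rw [h, integral_rpow (Or.inl (by norm_num))]
    norm_num
    rw [Real.sqrt_eq_rpow, Real.sqrt_eq_rpow]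
    ring
  rw [intervalIntegral.integral_add hi1 hi2, e1, e2]
  have s1 : Real.sqrt (1 - a) - Real.sqrt (1 - b) ≤ Real.sqrt (b - a) := by
    nlinarith [Real.sq_sqrt (by linarith : (0:ℝ) ≤ 1 - a), Real.sq_sqrt (by linarith : (0:ℝ) ≤ 1 - b),
      Real.sq_sqrt (by linarith : (0:ℝ) ≤ b - a), Real.sqrt_nonneg (1 - a), Real.sqrt_nonneg (1 - b),
      Real.sqrt_nonneg (b - a)]
  have s2 : Real.sqrt (1 + b) - Real.sqrt (1 + a) ≤ Real.sqrt (b - a) := by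
    nlinarith [Real.sq_sqrt (by linarith : (0:ℝ) ≤ 1 + a), Real.sq_sqrt (by linarith : (0:ℝ) ≤ 1 + b),
      Real.sq_sqrt (by linarith : (0:ℝ) ≤ b - a), Real.sqrt_nonneg (1 + a), Real.sqrt_nonneg (1 + b),
      Real.sqrt_nonneg (b - a)]
  linarith

lemma key_bound {a b : ℝ} (ha : -1 ≤ a) (hab : a ≤ b) (hb : b ≤ 1) (g' : ℝ → ℝ)
    (h1 : IntervalIntegrable g' MeasureTheory.volume (-1) 1)
    (h2 : IntervalIntegrable (fun s => g' s ^ 2) MeasureTheory.volume (-1) 1) :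
    |∫ t in a..b, g' t| ≤ 2 * (b - a) ^ ((1:ℝ)/4) *
      (∫ s in (-1:ℝ)..1, |g' s| ^ 2 * Real.sqrt (1 - s ^ 2)) ^ ((1:ℝ)/2) := by
  set μ := volume.restrict (Set.Ioc a b) with hμ
  set F : ℝ → ℝ := fun s => |g' s| * Real.sqrt (Real.sqrt (1 - s ^ 2)) with hF
  set G : ℝ → ℝ := fun s => (Real.sqrt (Real.sqrt (1 - s ^ 2)))⁻¹ with hG
  set M : ℝ → ℝ := fun s => (1 - s) ^ (-(1:ℝ)/2) + (1 + s) ^ (-(1:ℝ)/2) with hM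
  have hsub : Set.uIcc a b ⊆ Set.uIcc (-1 : ℝ) 1 := by
    rw [Set.uIcc_of_le hab, Set.uIcc_of_le (by norm_num)]
    exact Set.Icc_subset_Icc ha hb
  have hg'ab : IntervalIntegrable g' volume a b := h1.mono_set hsub
  have hIoc : IntegrableOn g' (Set.Ioc a b) volume :=
    (intervalIntegrable_iff_integrableOn_Ioc_of_le hab).1 hg'ab
  have hcont : Continuous fun s : ℝ => Real.sqrt (1 - s ^ 2) :=
    Real.continuous_sqrt.comp (by continuity)
  have hsq_big : IntegrableOn (fun s => |g' s| ^ 2 * Real.sqrt (1 - s ^ 2))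
      (Set.Ioc (-1 : ℝ) 1) volume := by
    have h2' : IntegrableOn (fun s => g' s ^ 2) (Set.Ioc (-1 : ℝ) 1) volume :=
      (intervalIntegrable_iff_integrableOn_Ioc_of_le (by norm_num)).1 h2
    have := h2'.bdd_mul (hcont.aestronglyMeasurable.restrict)
      (c := 1) (Filter.Eventually.of_forall fun s => by
        rw [Real.norm_eq_abs, abs_of_nonneg (Real.sqrt_nonneg _)]
        exact Real.sqrt_le_one.2 (by nlinarith [sq_nonneg s]))
    simpa [IntegrableOn, mul_comm, sq_abs] using this
  have hF2eq : ∀ s, F s ^ 2 = |g' s| ^ 2 * Real.sqrt (1 - s ^ 2) := fun s => by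
    simp [hF, mul_pow, Real.sq_sqrt (Real.sqrt_nonneg _)]
  have hG2eq : ∀ s, G s ^ 2 = (Real.sqrt (1 - s ^ 2))⁻¹ := fun s => by
    simp [hG, ← mul_inv, sq, Real.mul_self_sqrt (Real.sqrt_nonneg _)]
  have hF2int : Integrable (fun s => F s ^ 2) μ := by
    have : IntegrableOn (fun s => |g' s| ^ 2 * Real.sqrt (1 - s ^ 2)) (Set.Ioc a b) volume :=
      hsq_big.mono_set (Set.Ioc_subset_Ioc ha hb)
    simpa [hμ, IntegrableOn, funext hF2eq] using this
  have hFmeas : AEStronglyMeasurable F μ := by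
    exact ((hIoc.aestronglyMeasurable.norm).mul
      ((Real.continuous_sqrt.comp hcont).aestronglyMeasurable.restrict)).congr
      (Filter.Eventually.of_forall fun s => by simp [hF, Real.norm_eq_abs])
  have hGmeas : AEStronglyMeasurable G μ :=
    ((Real.continuous_sqrt.comp hcont).measurable.inv).aestronglyMeasurable
  have hi1 : IntervalIntegrable (fun s : ℝ => (1 - s) ^ (-(1:ℝ)/2)) volume a b := by
    have := (intervalIntegrable_rpow' (a := 1 - a) (b := 1 - b)
      (r := -(1:ℝ)/2) (by norm_num)).comp_sub_left 1
    simpa using this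
  have hi2 : IntervalIntegrable (fun s : ℝ => (1 + s) ^ (-(1:ℝ)/2)) volume a b := by
    have := (intervalIntegrable_rpow' (a := 1 + a) (b := 1 + b)
      (r := -(1:ℝ)/2) (by norm_num)).comp_add_left 1
    simpa using this
  have hMint : IntegrableOn M (Set.Ioc a b) volume :=
    (intervalIntegrable_iff_integrableOn_Ioc_of_le hab).1 (hi1.add hi2)
  have hptwise : ∀ s ∈ Set.Ioc a b, (Real.sqrt (1 - s ^ 2))⁻¹ ≤ M s := by
    intro s hs
    have hs1 : -1 < s := lt_of_le_of_lt ha hs.1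
    rcases eq_or_lt_of_le (hs.2.trans hb) with h1 | h1
    · rw [h1]
      norm_num
      positivity
    · have hu : (0:ℝ) < 1 - s := by linarith
      have hv : (0:ℝ) < 1 + s := by linarith
      have hfac : Real.sqrt (1 - s ^ 2) = Real.sqrt (1 - s) * Real.sqrt (1 + s) := by
        rw [← Real.sqrt_mul hu.le]; ring_nf
      have hru : (1 - s) ^ (-(1:ℝ)/2) = (Real.sqrt (1 - s))⁻¹ := by
        rw [Real.sqrt_eq_rpow, ← Real.rpow_neg hu.le]; norm_num
      have hrv : (1 + s) ^ (-(1:ℝ)/2) = (Real.sqrt (1 + s))⁻¹ := by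
        rw [Real.sqrt_eq_rpow, ← Real.rpow_neg hv.le]; norm_num
      rw [hM]; simp only [hfac, hru, hrv, mul_inv]
      have hu' : (0:ℝ) < Real.sqrt (1 - s) := Real.sqrt_pos.2 hu
      have hv' : (0:ℝ) < Real.sqrt (1 + s) := Real.sqrt_pos.2 hv
      have hsum : 1 ≤ Real.sqrt (1 - s) + Real.sqrt (1 + s) := by
        nlinarith [Real.sq_sqrt hu.le, Real.sq_sqrt hv.le]
      rw [inv_eq_one_div, inv_eq_one_div, div_mul_div_comm,
        div_add_div _ _ (ne_of_gt hu') (ne_of_gt hv'),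
        div_le_div_iff₀ (by positivity) (by positivity)]
      nlinarith [mul_pos hu' hv', mul_nonneg (mul_pos hu' hv').le (by linarith : (0:ℝ) ≤ √(1 - s) + √(1 + s) - 1)]
  have hG2meas : AEStronglyMeasurable (fun s => G s ^ 2) μ :=
    (((Real.continuous_sqrt.comp hcont).measurable.inv).pow_const 2).aestronglyMeasurable
  have hG2int : Integrable (fun s => G s ^ 2) μ := by
    refine Integrable.mono' hMint hG2meas ?_
    rw [hμ]
    refine (ae_restrict_iff' measurableSet_Ioc).2 (Filter.Eventually.of_forall fun s hs => ?_)
    rw [Real.norm_eq_abs, abs_of_nonneg (sq_nonneg _), hG2eq]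
    exact hptwise s hs
  -- a.e. identity |g'| = F * G on Ioc a b
  have hae1 : (∀ᵐ s : ℝ, s ≠ (1:ℝ)) := by
    rw [ae_iff]; simp only [not_not, Set.setOf_eq_eq_singleton]
    exact Real.volume_singleton
  have hcongr : (∫ s in Set.Ioc a b, |g' s|) = ∫ s, F s * G s ∂μ := by
    refine setIntegral_congr_ae measurableSet_Ioc ?_
    filter_upwards [hae1] with s hs1 hs
    have hlt : s < 1 := lt_of_le_of_ne (hs.2.trans hb) hs1
    have hgt : -1 < s := lt_of_le_of_lt ha hs.1
    have hpos : 0 < 1 - s ^ 2 := by nlinarith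
    have hne : Real.sqrt (Real.sqrt (1 - s ^ 2)) ≠ 0 :=
      ne_of_gt (Real.sqrt_pos.2 (Real.sqrt_pos.2 hpos))
    rw [hF, hG]
    field_simp
  -- Hölder
  have hpq : Real.HolderConjugate 2 2 := Real.HolderConjugate.two_two
  have hFmem : MemLp F (ENNReal.ofReal 2) μ := by
    rw [ENNReal.ofReal_ofNat]
    exact (memLp_two_iff_integrable_sq hFmeas).2 hF2int
  have hGmem : MemLp G (ENNReal.ofReal 2) μ := by
    rw [ENNReal.ofReal_ofNat]
    exact (memLp_two_iff_integrable_sq hGmeas).2 hG2int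
  have hCS := integral_mul_le_Lp_mul_Lq_of_nonneg hpq
    (Filter.Eventually.of_forall fun s => by positivity)
    (Filter.Eventually.of_forall fun s => by positivity) hFmem hGmem
  simp_rw [Real.rpow_two] at hCS
  -- bound the two factors
  set I := ∫ s in (-1:ℝ)..1, |g' s| ^ 2 * Real.sqrt (1 - s ^ 2) with hI
  have hFbound : (∫ s, F s ^ 2 ∂μ) ≤ I := by
    rw [hI, intervalIntegral.integral_of_le (by norm_num : (-1:ℝ) ≤ 1)]
    have he : (∫ s, F s ^ 2 ∂μ) = ∫ s in Set.Ioc a b, |g' s| ^ 2 * Real.sqrt (1 - s ^ 2) := by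
      rw [hμ]; exact integral_congr_ae (Filter.Eventually.of_forall fun s => hF2eq s)
    rw [he]
    exact setIntegral_mono_set hsq_big
      (Filter.Eventually.of_forall fun s => by positivity)
      (HasSubset.Subset.eventuallyLE (Set.Ioc_subset_Ioc ha hb))
  have hGbound : (∫ s, G s ^ 2 ∂μ) ≤ 4 * Real.sqrt (b - a) := by
    have h1' : (∫ s, G s ^ 2 ∂μ) ≤ ∫ s in Set.Ioc a b, M s := by
      rw [hμ]
      refine setIntegral_mono_on hG2int hMint measurableSet_Ioc fun s hs => ?_
      rw [hG2eq]; exact hptwise s hs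
    have h2' : (∫ s in Set.Ioc a b, M s) = ∫ s in a..b, M s :=
      (intervalIntegral.integral_of_le hab).symm
    calc (∫ s, G s ^ 2 ∂μ) ≤ ∫ s in Set.Ioc a b, M s := h1'
      _ = ∫ s in a..b, M s := h2'
      _ ≤ 4 * Real.sqrt (b - a) := weight_int_bound ha hab hb
  have hInonneg : 0 ≤ I :=
    intervalIntegral.integral_nonneg (by norm_num) fun s _ => by positivity
  have hA : (∫ s, F s ^ 2 ∂μ) ^ ((1:ℝ)/2) ≤ I ^ ((1:ℝ)/2) :=
    Real.rpow_le_rpow (integral_nonneg fun s => sq_nonneg _) hFbound (by norm_num)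
  have hB : (∫ s, G s ^ 2 ∂μ) ^ ((1:ℝ)/2) ≤ (4 * Real.sqrt (b - a)) ^ ((1:ℝ)/2) :=
    Real.rpow_le_rpow (integral_nonneg fun s => sq_nonneg _) hGbound (by norm_num)
  have h41 : (4:ℝ) ^ ((1:ℝ)/2) = 2 := by
    rw [show (4:ℝ) = 2 ^ (2:ℕ) by norm_num, ← Real.rpow_natCast 2 2,
      ← Real.rpow_mul (by norm_num : (0:ℝ) ≤ 2)]
    norm_num
  have h4 : (4 * Real.sqrt (b - a)) ^ ((1:ℝ)/2) = 2 * (b - a) ^ ((1:ℝ)/4) := by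
    rw [Real.mul_rpow (by norm_num) (Real.sqrt_nonneg _), Real.sqrt_eq_rpow,
      ← Real.rpow_mul (sub_nonneg.2 hab), h41]
    norm_num
  calc |∫ t in a..b, g' t| ≤ ∫ t in a..b, |g' t| :=
        intervalIntegral.abs_integral_le_integral_abs hab
    _ = ∫ s, F s * G s ∂μ := by
        rw [intervalIntegral.integral_of_le hab]; exact hcongr
    _ ≤ (∫ s, F s ^ 2 ∂μ) ^ ((1:ℝ)/2) * (∫ s, G s ^ 2 ∂μ) ^ ((1:ℝ)/2) := by
        convert hCS using 3
    _ ≤ I ^ ((1:ℝ)/2) * (4 * Real.sqrt (b - a)) ^ ((1:ℝ)/2) :=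
        mul_le_mul hA hB (Real.rpow_nonneg (integral_nonneg fun s => sq_nonneg _) _)
          (Real.rpow_nonneg hInonneg _)
    _ = 2 * (b - a) ^ ((1:ℝ)/4) * I ^ ((1:ℝ)/2) := by rw [h4]; ring


/-- There exists C > 0 so that for every α ∈ [−1,1], every g ∈ H¹(−1,1) with g(α) = 0
(represented by its absolutely continuous representative with square-integrable
derivative g'), and every x ∈ [−1,1]:
|g(x)| ≤ C·|x−α|^{1/4}·(∫_{−1}^1 |g'(s)|²√(1−s²) ds)^{1/2}. -/
theorem pointwise_bound_of_vanishing_H1 :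
    ∃ C : ℝ, 0 < C ∧ ∀ α ∈ Set.Icc (-1 : ℝ) 1, ∀ g g' : ℝ → ℝ,
      IntervalIntegrable g' MeasureTheory.volume (-1) 1 →
      IntervalIntegrable (fun s => g' s ^ 2) MeasureTheory.volume (-1) 1 →
      (∀ x ∈ Set.Icc (-1 : ℝ) 1, g x = ∫ t in α..x, g' t) →
      ∀ x ∈ Set.Icc (-1 : ℝ) 1,
        |g x| ≤ C * |x - α| ^ ((1 : ℝ) / 4) *
          (∫ s in (-1 : ℝ)..1, |g' s| ^ 2 * Real.sqrt (1 - s ^ 2)) ^ ((1 : ℝ) / 2) := by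
  refine ⟨2, two_pos, ?_⟩
  intro α hα g g' h1 h2 hg x hx
  rw [hg x hx]
  rcases le_total α x with h | h
  · have hkey := key_bound hα.1 h hx.2 g' h1 h2
    rw [abs_of_nonneg (sub_nonneg.2 h)]
    exact hkey
  · have hkey := key_bound hx.1 h hα.2 g' h1 h2
    rw [abs_of_nonpos (sub_nonpos.2 h), neg_sub,
      intervalIntegral.integral_symm, abs_neg]
    exact hkey
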